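/- Let u₁, u₂, f : ℝ × ℝ² → ℝ be smooth and set D_t = ∂_t + u₁ ∂₁ + u₂ ∂₂. Then for i ∈ {1,2}, at every point of ℝ × ℝ²: D_t(D_t(∂_i f)) = ∂_i(D_t(D_t f)) − 2 Σ_{j=1}^{2} (∂_i u_j) D_t(∂_j f) − Σ_{j=1}^{2} (∂_i(D_t u_j)) (∂_j f). -/

import Mathlib

open scoped BigOperators

noncomputable section

/-! Partial derivatives of curried functions of several real variables. -/

/-- derivative in the 1st of 2 arguments -/
def d1_2 (g : ℝ → ℝ → ℝ) : ℝ → ℝ → ℝ := fun a b => deriv (fun s => g s b) a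
/-- derivative in the 2nd of 2 arguments -/
def d2_2 (g : ℝ → ℝ → ℝ) : ℝ → ℝ → ℝ := fun a b => deriv (fun s => g a s) b

/-- derivative in the 1st of 3 arguments -/
def d1_3 (g : ℝ → ℝ → ℝ → ℝ) : ℝ → ℝ → ℝ → ℝ := fun a b c => deriv (fun s => g s b c) a
/-- derivative in the 2nd of 3 arguments -/
def d2_3 (g : ℝ → ℝ → ℝ → ℝ) : ℝ → ℝ → ℝ → ℝ := fun a b c => deriv (fun s => g a s c) b
/-- derivative in the 3rd of 3 arguments -/
def d3_3 (g : ℝ → ℝ → ℝ → ℝ) : ℝ → ℝ → ℝ → ℝ := fun a b c => deriv (fun s => g a b s) c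

/-- derivative in the 1st of 4 arguments -/
def d1_4 (g : ℝ → ℝ → ℝ → ℝ → ℝ) : ℝ → ℝ → ℝ → ℝ → ℝ := fun a b c e => deriv (fun s => g s b c e) a
/-- derivative in the 2nd of 4 arguments -/
def d2_4 (g : ℝ → ℝ → ℝ → ℝ → ℝ) : ℝ → ℝ → ℝ → ℝ → ℝ := fun a b c e => deriv (fun s => g a s c e) b
/-- derivative in the 3rd of 4 arguments -/
def d3_4 (g : ℝ → ℝ → ℝ → ℝ → ℝ) : ℝ → ℝ → ℝ → ℝ → ℝ := fun a b c e => deriv (fun s => g a b s e) c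
/-- derivative in the 4th of 4 arguments -/
def d4_4 (g : ℝ → ℝ → ℝ → ℝ → ℝ) : ℝ → ℝ → ℝ → ℝ → ℝ := fun a b c e => deriv (fun s => g a b c s) e

/-- spatial derivatives ∂₁, ∂₂, ∂₃ of v(t, x₁, x₂, x₃) -/
def dsp : Fin 3 → (ℝ → ℝ → ℝ → ℝ → ℝ) → (ℝ → ℝ → ℝ → ℝ → ℝ) := ![d2_4, d3_4, d4_4]
/-- tangential derivatives ∂₁, ∂₂ of g(t, x₁, x₂) -/
def dtg : Fin 2 → (ℝ → ℝ → ℝ → ℝ) → (ℝ → ℝ → ℝ → ℝ) := ![d2_3, d3_3]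
/-- spatial derivatives ∂₁, ∂₂, ∂₃ of v(x₁, x₂, x₃) -/
def dsp3 : Fin 3 → (ℝ → ℝ → ℝ → ℝ) → (ℝ → ℝ → ℝ → ℝ) := ![d1_3, d2_3, d3_3]
/-- derivatives ∂₁, ∂₂ of g(x₁, x₂) -/
def dtg2 : Fin 2 → (ℝ → ℝ → ℝ) → (ℝ → ℝ → ℝ) := ![d1_2, d2_2]

/-- C^∞ smoothness for a function of 2 real variables -/
def smooth2 (g : ℝ → ℝ → ℝ) : Prop :=
  ContDiff ℝ (⊤ : ℕ∞) (fun p : ℝ × ℝ => g p.1 p.2)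
/-- C^∞ smoothness for a function of 3 real variables -/
def smooth3 (g : ℝ → ℝ → ℝ → ℝ) : Prop :=
  ContDiff ℝ (⊤ : ℕ∞) (fun p : ℝ × ℝ × ℝ => g p.1 p.2.1 p.2.2)
/-- C^∞ smoothness for a function of 4 real variables -/
def smooth4 (g : ℝ → ℝ → ℝ → ℝ → ℝ) : Prop :=
  ContDiff ℝ (⊤ : ℕ∞) (fun p : ℝ × ℝ × ℝ × ℝ => g p.1 p.2.1 p.2.2.1 p.2.2.2)

/-- trace of v(t,x₁,x₂,x₃) on the graph x₃ = f(t,x₁,x₂) -/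
def tr (v : ℝ → ℝ → ℝ → ℝ → ℝ) (f : ℝ → ℝ → ℝ → ℝ) : ℝ → ℝ → ℝ → ℝ :=
  fun t x y => v t x y (f t x y)
/-- trace of v(x₁,x₂,x₃) on the graph x₃ = f(x₁,x₂) -/
def tr2 (v : ℝ → ℝ → ℝ → ℝ) (f : ℝ → ℝ → ℝ) : ℝ → ℝ → ℝ :=
  fun x y => v x y (f x y)

/-- the (non-normalized) outward normal N_f = (−∂₁f, −∂₂f, 1) of the graph of f(t,·) -/
def Nf (f : ℝ → ℝ → ℝ → ℝ) : Fin 3 → ℝ → ℝ → ℝ → ℝ :=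
  ![fun t x y => -(d2_3 f t x y), fun t x y => -(d3_3 f t x y), fun _ _ _ => 1]
/-- the (non-normalized) outward normal of the graph of a time-independent f -/
def Nf2 (f : ℝ → ℝ → ℝ) : Fin 3 → ℝ → ℝ → ℝ :=
  ![fun x y => -(d1_2 f x y), fun x y => -(d2_2 f x y), fun _ _ => 1]

/-- the interface material derivative D_t g = ∂_t g + u̲₁ ∂₁ g + u̲₂ ∂₂ g -/
def Dt (u : Fin 3 → ℝ → ℝ → ℝ → ℝ → ℝ) (f : ℝ → ℝ → ℝ → ℝ)
    (g : ℝ → ℝ → ℝ → ℝ) : ℝ → ℝ → ℝ → ℝ :=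
  fun t x y => d1_3 g t x y + tr (u 0) f t x y * d2_3 g t x y + tr (u 1) f t x y * d3_3 g t x y

/-- the material derivative D_t g = ∂_t g + u₁ ∂₁ g + u₂ ∂₂ g for given coefficients u₁,u₂ on ℝ×ℝ² -/
def Dt2 (u : Fin 2 → ℝ → ℝ → ℝ → ℝ) (g : ℝ → ℝ → ℝ → ℝ) : ℝ → ℝ → ℝ → ℝ :=
  fun t x y => d1_3 g t x y + u 0 t x y * d2_3 g t x y + u 1 t x y * d3_3 g t x y

/-- the tangential deformation derivative D_{F_k} g = F̲₁ₖ ∂₁ g + F̲₂ₖ ∂₂ g -/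
def DF (F : Fin 3 → Fin 3 → ℝ → ℝ → ℝ → ℝ → ℝ) (f : ℝ → ℝ → ℝ → ℝ) (k : Fin 3)
    (g : ℝ → ℝ → ℝ → ℝ) : ℝ → ℝ → ℝ → ℝ :=
  fun t x y => tr (F 0 k) f t x y * d2_3 g t x y + tr (F 1 k) f t x y * d3_3 g t x y

/-- the full material derivative D_t g = ∂_t g + Σ u_m ∂_m g on ℝ×ℝ³ -/
def Dt4 (u : Fin 3 → ℝ → ℝ → ℝ → ℝ → ℝ) (g : ℝ → ℝ → ℝ → ℝ → ℝ) : ℝ → ℝ → ℝ → ℝ → ℝ :=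
  fun t x y z => d1_4 g t x y z + ∑ m : Fin 3, u m t x y z * dsp m g t x y z

/-- the spatial Laplacian on ℝ×ℝ³ -/
def lap4 (g : ℝ → ℝ → ℝ → ℝ → ℝ) : ℝ → ℝ → ℝ → ℝ → ℝ :=
  fun t x y z => ∑ k : Fin 3, dsp k (dsp k g) t x y z


noncomputable section
namespace SOMI
abbrev E3 := ℝ × ℝ × ℝ

def pd (v : E3) (G : E3 → ℝ) : E3 → ℝ := fun p => fderiv ℝ G p v

lemma top_add_one : ((⊤:ℕ∞) : WithTop ℕ∞) + 1 ≤ ((⊤:ℕ∞) : WithTop ℕ∞) := by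
  rw [ENat.coe_top_add_one]

lemma sdiff {G : E3 → ℝ} (h : ContDiff ℝ (⊤:ℕ∞) G) (p : E3) : DifferentiableAt ℝ G p :=
  (h.differentiable (by norm_cast)).differentiableAt

lemma pd_contDiff {G : E3 → ℝ} (hG : ContDiff ℝ (⊤:ℕ∞) G) (v : E3) :
    ContDiff ℝ (⊤:ℕ∞) (pd v G) :=
  (hG.fderiv_right (m := (⊤:ℕ∞)) top_add_one).clm_apply contDiff_const

lemma pd_comm {G : E3 → ℝ} (hG : ContDiff ℝ (⊤:ℕ∞) G) (v w : E3) (p : E3) :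
    pd v (pd w G) p = pd w (pd v G) p := by
  have hsym : IsSymmSndFDerivAt ℝ G p := by
    apply ContDiffAt.isSymmSndFDerivAt (n := (⊤:ℕ∞)) hG.contDiffAt
    rw [minSmoothness_of_isRCLikeNormedField]; norm_cast
  have hd : DifferentiableAt ℝ (fderiv ℝ G) p :=
    ((hG.fderiv_right (m := (⊤:ℕ∞)) top_add_one).differentiable (by norm_cast)).differentiableAt
  have h1 : ∀ u : E3, fderiv ℝ (fun q => fderiv ℝ G q u) p
      = (fderiv ℝ (fderiv ℝ G) p).flip u := by
    intro u
    have := fderiv_clm_apply (c := fderiv ℝ G) (u := fun _ => u) hd (differentiableAt_const u)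
    simpa using this
  show fderiv ℝ (fun q => fderiv ℝ G q w) p v = fderiv ℝ (fun q => fderiv ℝ G q v) p w
  rw [h1 w, h1 v]
  simpa using hsym v w

lemma pd_add (v : E3) {G H : E3 → ℝ} {p : E3}
    (hG : DifferentiableAt ℝ G p) (hH : DifferentiableAt ℝ H p) :
    pd v (fun q => G q + H q) p = pd v G p + pd v H p := by
  show fderiv ℝ (fun q => G q + H q) p v = _
  rw [fderiv_fun_add hG hH]; rfl

lemma pd_sub (v : E3) {G H : E3 → ℝ} {p : E3}
    (hG : DifferentiableAt ℝ G p) (hH : DifferentiableAt ℝ H p) :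
    pd v (fun q => G q - H q) p = pd v G p - pd v H p := by
  show fderiv ℝ (fun q => G q - H q) p v = _
  rw [fderiv_fun_sub hG hH]; rfl

lemma pd_mul (v : E3) {G H : E3 → ℝ} {p : E3}
    (hG : DifferentiableAt ℝ G p) (hH : DifferentiableAt ℝ H p) :
    pd v (fun q => G q * H q) p = pd v G p * H p + G p * pd v H p := by
  show fderiv ℝ (fun q => G q * H q) p v = _
  rw [fderiv_fun_mul hG hH]
  show G p * fderiv ℝ H p v + H p * fderiv ℝ G p v = _
  unfold pd; ring

/-- material-derivative operator at the uncurried level -/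
def Mt (U0 U1 G : E3 → ℝ) : E3 → ℝ :=
  fun p => pd (1,0,0) G p + U0 p * pd (0,1,0) G p + U1 p * pd (0,0,1) G p

lemma Mt_contDiff {U0 U1 G : E3 → ℝ} (hU0 : ContDiff ℝ (⊤:ℕ∞) U0)
    (hU1 : ContDiff ℝ (⊤:ℕ∞) U1) (hG : ContDiff ℝ (⊤:ℕ∞) G) :
    ContDiff ℝ (⊤:ℕ∞) (Mt U0 U1 G) :=
  ((pd_contDiff hG _).add (hU0.mul (pd_contDiff hG _))).add (hU1.mul (pd_contDiff hG _))

lemma pd_Mt {U0 U1 G : E3 → ℝ} (hU0 : ContDiff ℝ (⊤:ℕ∞) U0)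
    (hU1 : ContDiff ℝ (⊤:ℕ∞) U1) (hG : ContDiff ℝ (⊤:ℕ∞) G) (v : E3) (p : E3) :
    pd v (Mt U0 U1 G) p
      = Mt U0 U1 (pd v G) p + pd v U0 p * pd (0,1,0) G p + pd v U1 p * pd (0,0,1) G p := by
  have key : pd v (Mt U0 U1 G) p
      = pd v (fun q => (pd (1,0,0) G q + U0 q * pd (0,1,0) G q) + U1 q * pd (0,0,1) G q) p := rfl
  rw [key,
    pd_add v ((sdiff (pd_contDiff hG _) p).fun_add ((sdiff hU0 p).fun_mul (sdiff (pd_contDiff hG _) p)))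
      ((sdiff hU1 p).fun_mul (sdiff (pd_contDiff hG _) p)),
    pd_add v (sdiff (pd_contDiff hG _) p) ((sdiff hU0 p).fun_mul (sdiff (pd_contDiff hG _) p)),
    pd_mul v (sdiff hU0 p) (sdiff (pd_contDiff hG _) p),
    pd_mul v (sdiff hU1 p) (sdiff (pd_contDiff hG _) p)]
  show _ = pd (1,0,0) (pd v G) p + U0 p * pd (0,1,0) (pd v G) p + U1 p * pd (0,0,1) (pd v G) p
    + _ + _
  rw [pd_comm hG v (1,0,0) p, pd_comm hG v (0,1,0) p, pd_comm hG v (0,0,1) p]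
  ring

lemma Mt_sub {U0 U1 A B : E3 → ℝ} {p : E3}
    (hA : DifferentiableAt ℝ A p) (hB : DifferentiableAt ℝ B p) :
    Mt U0 U1 (fun q => A q - B q) p = Mt U0 U1 A p - Mt U0 U1 B p := by
  show _ = Mt U0 U1 A p - Mt U0 U1 B p
  unfold Mt
  rw [pd_sub _ hA hB, pd_sub _ hA hB, pd_sub _ hA hB]; ring

lemma Mt_add {U0 U1 A B : E3 → ℝ} {p : E3}
    (hA : DifferentiableAt ℝ A p) (hB : DifferentiableAt ℝ B p) :
    Mt U0 U1 (fun q => A q + B q) p = Mt U0 U1 A p + Mt U0 U1 B p := by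
  unfold Mt
  rw [pd_add _ hA hB, pd_add _ hA hB, pd_add _ hA hB]; ring

lemma Mt_mul {U0 U1 A B : E3 → ℝ} {p : E3}
    (hA : DifferentiableAt ℝ A p) (hB : DifferentiableAt ℝ B p) :
    Mt U0 U1 (fun q => A q * B q) p = Mt U0 U1 A p * B p + A p * Mt U0 U1 B p := by
  unfold Mt
  rw [pd_mul _ hA hB, pd_mul _ hA hB, pd_mul _ hA hB]; ring


lemma pd_main {U0 U1 G : E3 → ℝ} (hU0 : ContDiff ℝ (⊤:ℕ∞) U0)
    (hU1 : ContDiff ℝ (⊤:ℕ∞) U1) (hG : ContDiff ℝ (⊤:ℕ∞) G) (w : E3) (p : E3) :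
    Mt U0 U1 (Mt U0 U1 (pd w G)) p
      = pd w (Mt U0 U1 (Mt U0 U1 G)) p
        - 2 * (pd w U0 p * Mt U0 U1 (pd (0,1,0) G) p + pd w U1 p * Mt U0 U1 (pd (0,0,1) G) p)
        - (pd w (Mt U0 U1 U0) p * pd (0,1,0) G p + pd w (Mt U0 U1 U1) p * pd (0,0,1) G p) := by
  have hMG : ContDiff ℝ (⊤:ℕ∞) (Mt U0 U1 G) := Mt_contDiff hU0 hU1 hG
  have F1 : Mt U0 U1 (pd w G)
      = fun q => pd w (Mt U0 U1 G) q
          - (pd w U0 q * pd (0,1,0) G q + pd w U1 q * pd (0,0,1) G q) := by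
    funext q
    rw [pd_Mt hU0 hU1 hG w q]; ring
  rw [F1]
  have hA : DifferentiableAt ℝ (fun q => pd w (Mt U0 U1 G) q) p := sdiff (pd_contDiff hMG w) p
  have hB0 : DifferentiableAt ℝ (fun q => pd w U0 q * pd (0,1,0) G q) p :=
    (sdiff (pd_contDiff hU0 w) p).mul (sdiff (pd_contDiff hG _) p)
  have hB1 : DifferentiableAt ℝ (fun q => pd w U1 q * pd (0,0,1) G q) p :=
    (sdiff (pd_contDiff hU1 w) p).mul (sdiff (pd_contDiff hG _) p)
  rw [Mt_sub hA (hB0.fun_add hB1), Mt_add hB0 hB1,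
    Mt_mul (sdiff (pd_contDiff hU0 w) p) (sdiff (pd_contDiff hG _) p),
    Mt_mul (sdiff (pd_contDiff hU1 w) p) (sdiff (pd_contDiff hG _) p)]
  have h1 : Mt U0 U1 (pd w (Mt U0 U1 G)) p
      = pd w (Mt U0 U1 (Mt U0 U1 G)) p
        - pd w U0 p * pd (0,1,0) (Mt U0 U1 G) p - pd w U1 p * pd (0,0,1) (Mt U0 U1 G) p := by
    rw [pd_Mt hU0 hU1 hMG w p]; ring
  have h2 : pd (0,1,0) (Mt U0 U1 G) p
      = Mt U0 U1 (pd (0,1,0) G) p + pd (0,1,0) U0 p * pd (0,1,0) G p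
        + pd (0,1,0) U1 p * pd (0,0,1) G p := pd_Mt hU0 hU1 hG _ p
  have h3 : pd (0,0,1) (Mt U0 U1 G) p
      = Mt U0 U1 (pd (0,0,1) G) p + pd (0,0,1) U0 p * pd (0,1,0) G p
        + pd (0,0,1) U1 p * pd (0,0,1) G p := pd_Mt hU0 hU1 hG _ p
  have h4 : Mt U0 U1 (pd w U0) p
      = pd w (Mt U0 U1 U0) p - pd w U0 p * pd (0,1,0) U0 p - pd w U1 p * pd (0,0,1) U0 p := by
    rw [pd_Mt hU0 hU1 hU0 w p]; ring
  have h5 : Mt U0 U1 (pd w U1) p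
      = pd w (Mt U0 U1 U1) p - pd w U0 p * pd (0,1,0) U1 p - pd w U1 p * pd (0,0,1) U1 p := by
    rw [pd_Mt hU0 hU1 hU1 w p]; ring
  rw [h1, h2, h3, h4, h5]
  ring


def uc (g : ℝ → ℝ → ℝ → ℝ) : E3 → ℝ := fun p => g p.1 p.2.1 p.2.2

lemma d1_eq {g : ℝ → ℝ → ℝ → ℝ} (hg : smooth3 g) (t x y : ℝ) :
    d1_3 g t x y = pd (1,0,0) (uc g) (t,x,y) := by
  have hline : HasDerivAt (fun s : ℝ => ((s, x, y) : E3)) (1,0,0) t := by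
    simpa using (((hasDerivAt_id t).prodMk (hasDerivAt_const t ((x,y) : ℝ×ℝ))).congr_deriv (by rfl : ((1:ℝ), (0:ℝ×ℝ)) = (1,0,0)))
  have hg' : HasFDerivAt (uc g) (fderiv ℝ (uc g) ((t,x,y):E3)) ((t,x,y):E3) :=
    (sdiff hg ((t,x,y):E3)).hasFDerivAt
  exact (hg'.comp_hasDerivAt t hline).deriv

lemma d2_eq {g : ℝ → ℝ → ℝ → ℝ} (hg : smooth3 g) (t x y : ℝ) :
    d2_3 g t x y = pd (0,1,0) (uc g) (t,x,y) := by
  have hline : HasDerivAt (fun s : ℝ => ((t, s, y) : E3)) (0,1,0) x := by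
    simpa using ((hasDerivAt_const x t).prodMk ((hasDerivAt_id x).prodMk (hasDerivAt_const x y)))
  have hg' : HasFDerivAt (uc g) (fderiv ℝ (uc g) ((t,x,y):E3)) ((t,x,y):E3) :=
    (sdiff hg ((t,x,y):E3)).hasFDerivAt
  exact (hg'.comp_hasDerivAt x hline).deriv

lemma d3_eq {g : ℝ → ℝ → ℝ → ℝ} (hg : smooth3 g) (t x y : ℝ) :
    d3_3 g t x y = pd (0,0,1) (uc g) (t,x,y) := by
  have hline : HasDerivAt (fun s : ℝ => ((t, x, s) : E3)) (0,0,1) y := by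
    simpa using ((hasDerivAt_const y t).prodMk ((hasDerivAt_const y x).prodMk (hasDerivAt_id y)))
  have hg' : HasFDerivAt (uc g) (fderiv ℝ (uc g) ((t,x,y):E3)) ((t,x,y):E3) :=
    (sdiff hg ((t,x,y):E3)).hasFDerivAt
  exact (hg'.comp_hasDerivAt y hline).deriv

lemma uc_Dt2 {u : Fin 2 → ℝ → ℝ → ℝ → ℝ} {g : ℝ → ℝ → ℝ → ℝ} (hg : smooth3 g) :
    uc (Dt2 u g) = Mt (uc (u 0)) (uc (u 1)) (uc g) := by
  funext p
  obtain ⟨t, x, y⟩ := p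
  show Dt2 u g t x y = _
  unfold Dt2 Mt
  rw [d1_eq hg, d2_eq hg, d3_eq hg]
  rfl

lemma uc_d2 {g : ℝ → ℝ → ℝ → ℝ} (hg : smooth3 g) : uc (d2_3 g) = pd (0,1,0) (uc g) := by
  funext p; obtain ⟨t, x, y⟩ := p; exact d2_eq hg t x y

lemma uc_d3 {g : ℝ → ℝ → ℝ → ℝ} (hg : smooth3 g) : uc (d3_3 g) = pd (0,0,1) (uc g) := by
  funext p; obtain ⟨t, x, y⟩ := p; exact d3_eq hg t x y

lemma smooth3_Dt2 {u : Fin 2 → ℝ → ℝ → ℝ → ℝ} {g : ℝ → ℝ → ℝ → ℝ}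
    (hu : ∀ j, smooth3 (u j)) (hg : smooth3 g) : smooth3 (Dt2 u g) := by
  have : ContDiff ℝ (⊤:ℕ∞) (uc (Dt2 u g)) := by
    rw [uc_Dt2 hg]; exact Mt_contDiff (hu 0) (hu 1) hg
  exact this

lemma smooth3_d2 {g : ℝ → ℝ → ℝ → ℝ} (hg : smooth3 g) : smooth3 (d2_3 g) := by
  have : ContDiff ℝ (⊤:ℕ∞) (uc (d2_3 g)) := by rw [uc_d2 hg]; exact pd_contDiff hg _
  exact this

lemma smooth3_d3 {g : ℝ → ℝ → ℝ → ℝ} (hg : smooth3 g) : smooth3 (d3_3 g) := by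
  have : ContDiff ℝ (⊤:ℕ∞) (uc (d3_3 g)) := by rw [uc_d3 hg]; exact pd_contDiff hg _
  exact this

end SOMI

/-- the second-order material-derivative identity for tangential derivatives of f. -/
theorem second_order_material_identity
    (u : Fin 2 → ℝ → ℝ → ℝ → ℝ) (f : ℝ → ℝ → ℝ → ℝ)
    (hu : ∀ j, smooth3 (u j)) (hf : smooth3 f) :
    ∀ i : Fin 2, ∀ t x y,
      Dt2 u (Dt2 u (dtg i f)) t x y
        = dtg i (Dt2 u (Dt2 u f)) t x y
          - 2 * ∑ j : Fin 2, dtg i (u j) t x y * Dt2 u (dtg j f) t x y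
          - ∑ j : Fin 2, dtg i (Dt2 u (u j)) t x y * dtg j f t x y := by
  intro i t x y
  have hDf : smooth3 (Dt2 u f) := SOMI.smooth3_Dt2 hu hf
  have hDDf : smooth3 (Dt2 u (Dt2 u f)) := SOMI.smooth3_Dt2 hu hDf
  have hd2f : smooth3 (d2_3 f) := SOMI.smooth3_d2 hf
  have hd3f : smooth3 (d3_3 f) := SOMI.smooth3_d3 hf
  have hDd2f : smooth3 (Dt2 u (d2_3 f)) := SOMI.smooth3_Dt2 hu hd2f
  have hDd3f : smooth3 (Dt2 u (d3_3 f)) := SOMI.smooth3_Dt2 hu hd3f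
  fin_cases i
  · simp only [dtg, Fin.sum_univ_two, Fin.isValue, Fin.mk_zero, Fin.mk_one, Matrix.cons_val_zero, Matrix.cons_val_one,
      Matrix.head_cons]
    have e1 : Dt2 u (Dt2 u (d2_3 f)) t x y
        = SOMI.Mt (SOMI.uc (u 0)) (SOMI.uc (u 1)) (SOMI.uc (Dt2 u (d2_3 f))) (t,x,y) :=
      congrFun (SOMI.uc_Dt2 hDd2f) (t,x,y)
    have e2 : Dt2 u (d2_3 f) t x y
        = SOMI.Mt (SOMI.uc (u 0)) (SOMI.uc (u 1)) (SOMI.uc (d2_3 f)) (t,x,y) :=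
      congrFun (SOMI.uc_Dt2 hd2f) (t,x,y)
    have e3 : Dt2 u (d3_3 f) t x y
        = SOMI.Mt (SOMI.uc (u 0)) (SOMI.uc (u 1)) (SOMI.uc (d3_3 f)) (t,x,y) :=
      congrFun (SOMI.uc_Dt2 hd3f) (t,x,y)
    rw [e1, e2, e3, SOMI.uc_Dt2 hd2f,
      SOMI.d2_eq hDDf, SOMI.uc_Dt2 hDf, SOMI.uc_Dt2 hf,
      SOMI.d2_eq (SOMI.smooth3_Dt2 hu (hu 0)), SOMI.uc_Dt2 (hu 0),
      SOMI.d2_eq (SOMI.smooth3_Dt2 hu (hu 1)), SOMI.uc_Dt2 (hu 1),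
      SOMI.d2_eq (hu 0), SOMI.d2_eq (hu 1), SOMI.d2_eq hf, SOMI.d3_eq hf,
      SOMI.uc_d2 hf, SOMI.uc_d3 hf]
    exact SOMI.pd_main (hu 0) (hu 1) hf (0,1,0) (t,x,y)
  · simp only [dtg, Fin.sum_univ_two, Fin.isValue, Fin.mk_zero, Fin.mk_one, Matrix.cons_val_zero, Matrix.cons_val_one,
      Matrix.head_cons]
    have e1 : Dt2 u (Dt2 u (d3_3 f)) t x y
        = SOMI.Mt (SOMI.uc (u 0)) (SOMI.uc (u 1)) (SOMI.uc (Dt2 u (d3_3 f))) (t,x,y) :=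
      congrFun (SOMI.uc_Dt2 hDd3f) (t,x,y)
    have e2 : Dt2 u (d2_3 f) t x y
        = SOMI.Mt (SOMI.uc (u 0)) (SOMI.uc (u 1)) (SOMI.uc (d2_3 f)) (t,x,y) :=
      congrFun (SOMI.uc_Dt2 hd2f) (t,x,y)
    have e3 : Dt2 u (d3_3 f) t x y
        = SOMI.Mt (SOMI.uc (u 0)) (SOMI.uc (u 1)) (SOMI.uc (d3_3 f)) (t,x,y) :=
      congrFun (SOMI.uc_Dt2 hd3f) (t,x,y)
    rw [e1, e2, e3, SOMI.uc_Dt2 hd3f,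
      SOMI.d3_eq hDDf, SOMI.uc_Dt2 hDf, SOMI.uc_Dt2 hf,
      SOMI.d3_eq (SOMI.smooth3_Dt2 hu (hu 0)), SOMI.uc_Dt2 (hu 0),
      SOMI.d3_eq (SOMI.smooth3_Dt2 hu (hu 1)), SOMI.uc_Dt2 (hu 1),
      SOMI.d3_eq (hu 0), SOMI.d3_eq (hu 1), SOMI.d2_eq hf, SOMI.d3_eq hf,
      SOMI.uc_d2 hf, SOMI.uc_d3 hf]
    exact SOMI.pd_main (hu 0) (hu 1) hf (0,0,1) (t,x,y)
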